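/- Let X be a nonzero symmetric Temperley–Lieb object in a symmetric tensor category C over k, with structure maps α : 𝟙 → X ⊗ X and β : X ⊗ X → 𝟙. Then α is a monomorphism, β is an epimorphism, and the image of α equals the image of c_{X,X} − id_{X⊗X}; in particular α induces an isomorphism 𝟙 ≅ ∧²X. -/

import Mathlib

set_option linter.unusedSectionVars false
set_option maxHeartbeats 1000000


open CategoryTheory CategoryTheory.Limits CategoryTheory.MonoidalCategory

universe v u w

/-- An object `L` of a monoidal category is invertible if `L ⊗ L' ≅ 𝟙` for some `L'`. -/
def IsInvertibleObj {C : Type u} [Category.{v} C] [MonoidalCategory C] (L : C) : Prop :=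
  ∃ L' : C, Nonempty (L ⊗ L' ≅ 𝟙_ C)

/-- An invertible object `L` of a braided category is *even* if the braiding on `L ⊗ L` is
the identity. -/
def IsEvenInvertibleObj {C : Type u} [Category.{v} C] [MonoidalCategory C]
    [BraidedCategory C] (L : C) : Prop :=
  IsInvertibleObj L ∧ (β_ L L).hom = 𝟙 (L ⊗ L)

section

variable {k : Type w} [Field k] [IsAlgClosed k]
variable {C : Type u} [Category.{v} C] [Abelian C] [Linear k C]
  [MonoidalCategory C] [SymmetricCategory C]
  [MonoidalPreadditive C] [MonoidalLinear k C] [RigidCategory C]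
  [∀ X Y : C, FiniteDimensional k (X ⟶ Y)]

section Aux

/- Whiskering preserves monos and epis, since tensoring with any object is both a left and a
right adjoint in a rigid category. -/

private lemma tl_mono_whiskerLeft (Z : C) {A B : C} (f : A ⟶ B) [Mono f] : Mono (Z ◁ f) := by
  haveI := (tensorLeftAdjunction Z (Zᘁ)).isRightAdjoint
  haveI := Functor.preservesMonomorphisms_of_adjunction (tensorLeftAdjunction Z (Zᘁ))
  have h : Mono ((tensorLeft Z).map f) := Functor.map_mono _ f
  simpa [tensorLeft] using h

private lemma tl_epi_whiskerLeft (Z : C) {A B : C} (f : A ⟶ B) [Epi f] : Epi (Z ◁ f) := by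
  haveI := Functor.preservesEpimorphisms_of_adjunction (tensorLeftAdjunction (ᘁZ : C) Z)
  have h : Epi ((tensorLeft Z).map f) := Functor.map_epi _ f
  simpa [tensorLeft] using h

private lemma tl_mono_whiskerRight {A B : C} (f : A ⟶ B) [Mono f] (Z : C) : Mono (f ▷ Z) := by
  haveI := Functor.preservesMonomorphisms_of_adjunction (tensorRightAdjunction (ᘁZ : C) Z)
  have h : Mono ((tensorRight Z).map f) := Functor.map_mono _ f
  simpa [tensorRight] using h

private lemma tl_epi_whiskerRight {A B : C} (f : A ⟶ B) [Epi f] (Z : C) : Epi (f ▷ Z) := by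
  haveI := Functor.preservesEpimorphisms_of_adjunction (tensorRightAdjunction Z (Zᘁ))
  have h : Epi ((tensorRight Z).map f) := Functor.map_epi _ f
  simpa [tensorRight] using h

private lemma tl_isZero_of_mono_zero {A B : C} (f : A ⟶ B) [Mono f] (h : f = 0) : IsZero A := by
  rw [IsZero.iff_id_eq_zero]
  exact zero_of_comp_mono f (by rw [Category.id_comp, h])

private lemma tl_isZero_of_epi_zero {A B : C} (f : A ⟶ B) [Epi f] (h : f = 0) : IsZero B := by
  rw [IsZero.iff_id_eq_zero]
  exact zero_of_epi_comp f (by rw [Category.comp_id, h])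

private lemma tl_isZero_tensorL {A : C} (h : IsZero A) (B : C) : IsZero (A ⊗ B) := by
  rw [IsZero.iff_id_eq_zero] at h ⊢
  rw [← MonoidalCategory.id_whiskerRight, h, MonoidalPreadditive.zero_whiskerRight]

private lemma tl_isZero_tensorR {B : C} (h : IsZero B) (A : C) : IsZero (A ⊗ B) := by
  rw [IsZero.iff_id_eq_zero] at h ⊢
  rw [← MonoidalCategory.whiskerLeft_id, h, MonoidalPreadditive.whiskerLeft_zero]

private lemma tl_isZero_of_tensor_dual {A : C} [HasRightDual A]
    (h : IsZero (A ⊗ (Aᘁ : C))) : IsZero A := by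
  rw [IsZero.iff_id_eq_zero]
  have z := ExactPairing.evaluation_coevaluation (X := A) (Y := (Aᘁ : C))
  have h1 : η_ A (Aᘁ) ▷ A = 0 := (tl_isZero_tensorL h A).eq_zero_of_tgt _
  calc 𝟙 A = (λ_ A).inv ≫ ((λ_ A).hom ≫ (ρ_ A).inv) ≫ (ρ_ A).hom := by simp
    _ = (λ_ A).inv ≫ (η_ A (Aᘁ) ▷ A ≫ (α_ _ _ _).hom ≫ A ◁ ε_ A (Aᘁ)) ≫ (ρ_ A).hom := by
        rw [z]
    _ = 0 := by rw [h1]; simp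

private lemma tl_isZero_of_dual_tensor {A : C} [HasRightDual A]
    (h : IsZero ((Aᘁ : C) ⊗ A)) : IsZero A := by
  rw [IsZero.iff_id_eq_zero]
  have z := ExactPairing.evaluation_coevaluation (X := A) (Y := (Aᘁ : C))
  have h1 : A ◁ ε_ A (Aᘁ) = 0 := (tl_isZero_tensorR h A).eq_zero_of_src _
  calc 𝟙 A = (λ_ A).inv ≫ ((λ_ A).hom ≫ (ρ_ A).inv) ≫ (ρ_ A).hom := by simp
    _ = (λ_ A).inv ≫ (η_ A (Aᘁ) ▷ A ≫ (α_ _ _ _).hom ≫ A ◁ ε_ A (Aᘁ)) ≫ (ρ_ A).hom := by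
        rw [z]
    _ = 0 := by rw [h1]; simp

private lemma tl_isZero_of_isZero_dual {A : C} [HasRightDual A]
    (h : IsZero ((Aᘁ : C))) : IsZero A :=
  tl_isZero_of_tensor_dual (tl_isZero_tensorR h A)

/-- Key lemma: if a mono into the unit composes to zero with an epi out of the unit,
then the tensor product of the outer objects is zero. -/
private lemma tl_zed {A B : C} (m : A ⟶ 𝟙_ C) (e : 𝟙_ C ⟶ B) [Mono m] [Epi e]
    (h : m ≫ e = 0) : IsZero (A ⊗ B) := by
  have hkey : A ◁ e ≫ m ▷ B = 0 := by
    rw [whisker_exchange, MonoidalCategory.whiskerRight_id, MonoidalCategory.id_whiskerLeft, unitors_equal]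
    simp only [Category.assoc, Iso.inv_hom_id_assoc]
    rw [reassoc_of% h]
    simp
  haveI : Epi (A ◁ e) := tl_epi_whiskerLeft A e
  haveI : Mono (m ▷ B) := tl_mono_whiskerRight m B
  have h0 : m ▷ B = 0 := zero_of_epi_comp (A ◁ e) (by rw [hkey])
  exact tl_isZero_of_mono_zero _ h0

private lemma tl_mate_zero {A B : C} [HasRightDual A] [HasRightDual B] :
    ((0 : A ⟶ B)ᘁ) = 0 := by
  simp [rightAdjointMate]

private lemma tl_mate_epi {A B : C} [HasRightDual A] [HasRightDual B] (f : A ⟶ B) [Mono f] :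
    Epi (fᘁ) := by
  refine Preadditive.epi_of_cancel_zero _ (fun {Z} t ht => ?_)
  haveI : Mono (f ▷ Z) := tl_mono_whiskerRight f Z
  have h1 : (η_ A (Aᘁ) ≫ A ◁ t) ≫ f ▷ Z = 0 := by
    have hmate := coevaluation_comp_rightAdjointMate f
    calc (η_ A (Aᘁ) ≫ A ◁ t) ≫ f ▷ Z
        = η_ A (Aᘁ) ≫ (A ◁ t ≫ f ▷ Z) := by rw [Category.assoc]
      _ = η_ A (Aᘁ) ≫ (f ▷ (Aᘁ) ≫ B ◁ t) := by rw [whisker_exchange]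
      _ = (η_ A (Aᘁ) ≫ f ▷ (Aᘁ)) ≫ B ◁ t := by rw [Category.assoc]
      _ = (η_ B (Bᘁ) ≫ B ◁ (fᘁ)) ≫ B ◁ t := by rw [hmate]
      _ = η_ B (Bᘁ) ≫ B ◁ (fᘁ ≫ t) := by
          rw [Category.assoc, MonoidalCategory.whiskerLeft_comp]
      _ = 0 := by rw [ht, MonoidalPreadditive.whiskerLeft_zero, comp_zero]
  have h2 : η_ A (Aᘁ) ≫ A ◁ t = 0 := zero_of_comp_mono _ h1
  have e1 := tensorLeftHomEquiv_symm_coevaluation_comp_whiskerLeft (Y := A) t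
  have e0 := tensorLeftHomEquiv_symm_coevaluation_comp_whiskerLeft (Y := A)
    (0 : (Aᘁ : C) ⟶ Z)
  have h3 : (ρ_ (Aᘁ : C)).hom ≫ t = (ρ_ (Aᘁ : C)).hom ≫ (0 : (Aᘁ : C) ⟶ Z) := by
    rw [← e1, ← e0]
    congr 1
    rw [h2, MonoidalPreadditive.whiskerLeft_zero, comp_zero]
  have := (cancel_epi (ρ_ (Aᘁ : C)).hom).mp h3
  simpa using this

private lemma tl_mate_mono {A B : C} [HasRightDual A] [HasRightDual B] (f : A ⟶ B) [Epi f] :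
    Mono (fᘁ) := by
  refine Preadditive.mono_of_cancel_zero _ (fun {Z} t ht => ?_)
  haveI : Epi (Z ◁ f) := tl_epi_whiskerLeft Z f
  have h1 : Z ◁ f ≫ (t ▷ B ≫ ε_ B (Bᘁ)) = 0 := by
    have hmate := rightAdjointMate_comp_evaluation f
    calc Z ◁ f ≫ (t ▷ B ≫ ε_ B (Bᘁ))
        = (Z ◁ f ≫ t ▷ B) ≫ ε_ B (Bᘁ) := by rw [Category.assoc]
      _ = (t ▷ A ≫ (Bᘁ) ◁ f) ≫ ε_ B (Bᘁ) := by rw [whisker_exchange]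
      _ = t ▷ A ≫ ((Bᘁ) ◁ f ≫ ε_ B (Bᘁ)) := by rw [Category.assoc]
      _ = t ▷ A ≫ ((fᘁ) ▷ A ≫ ε_ A (Aᘁ)) := by rw [hmate]
      _ = ((t ≫ fᘁ) ▷ A) ≫ ε_ A (Aᘁ) := by
          rw [MonoidalCategory.comp_whiskerRight, Category.assoc]
      _ = 0 := by rw [ht, MonoidalPreadditive.zero_whiskerRight, zero_comp]
  have h2 : t ▷ B ≫ ε_ B (Bᘁ) = 0 := zero_of_epi_comp _ h1
  have e1 := tensorRightHomEquiv_whiskerRight_comp_evaluation (X := B) t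
  have e0 := tensorRightHomEquiv_whiskerRight_comp_evaluation (X := B) (0 : Z ⟶ (Bᘁ : C))
  have h3 : t ≫ (λ_ (Bᘁ : C)).inv = (0 : Z ⟶ (Bᘁ : C)) ≫ (λ_ (Bᘁ : C)).inv := by
    rw [← e1, ← e0]
    congr 1
    rw [h2, MonoidalPreadditive.zero_whiskerRight, zero_comp]
  have := (cancel_mono (λ_ (Bᘁ : C)).inv).mp h3
  simpa using this

/-- Any nonzero subobject of the unit of a (nonzero) rigid symmetric tensor category with
scalar endomorphisms of the unit is the whole unit. -/
private lemma tl_unit_sub_isIso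
    (hEnd : ∀ f : 𝟙_ C ⟶ 𝟙_ C, ∃ a : k, f = a • 𝟙 (𝟙_ C))
    (hU : ¬ IsZero (𝟙_ C)) {K : C} (κ : K ⟶ 𝟙_ C) [Mono κ] (hK : ¬ IsZero K) :
    IsIso κ := by
  by_cases hQ : IsZero (cokernel κ)
  · haveI : Epi κ := Preadditive.epi_of_isZero_cokernel κ hQ
    exact isIso_of_mono_of_epi κ
  · exfalso
    have hq : κ ≫ cokernel.π κ = 0 := cokernel.condition κ
    -- dual morphisms
    let j : ((cokernel κ)ᘁ : C) ⟶ 𝟙_ C := (cokernel.π κ)ᘁ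
    let κ' : 𝟙_ C ⟶ (Kᘁ : C) := κᘁ
    haveI hjm : Mono j := tl_mate_mono (cokernel.π κ)
    haveI hκ'e : Epi κ' := tl_mate_epi κ
    have hjκ' : j ≫ κ' = 0 := by
      show ((cokernel.π κ)ᘁ) ≫ (κᘁ) = 0
      rw [← comp_rightAdjointMate, hq, tl_mate_zero]
    -- the intersection of K and (cokernel κ)ᘁ in 𝟙 is zero
    have hR : IsZero (pullback κ j) := by
      have hcond := pullback.condition (f := κ) (g := j)
      haveI : Mono (pullback.fst κ j) := inferInstance
      haveI : Mono (pullback.fst κ j ≫ κ) := mono_comp _ _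
      have hμ : (pullback.fst κ j ≫ κ) ≫ κ' = 0 := by
        rw [hcond, Category.assoc, hjκ', comp_zero]
      have hRK : IsZero (pullback κ j ⊗ (Kᘁ : C)) := tl_zed _ κ' hμ
      haveI : Epi ((pullback.fst κ j)ᘁ) := tl_mate_epi (pullback.fst κ j)
      haveI : Epi (pullback κ j ◁ ((pullback.fst κ j)ᘁ)) := tl_epi_whiskerLeft _ _
      have h0 : pullback κ j ◁ ((pullback.fst κ j)ᘁ) = 0 := hRK.eq_zero_of_src _
      have hRR : IsZero (pullback κ j ⊗ ((pullback κ j)ᘁ : C)) := tl_isZero_of_epi_zero _ h0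
      exact tl_isZero_of_tensor_dual hRR
    -- the sum map is mono
    haveI hdm : Mono (biprod.desc κ j) := by
      refine Preadditive.mono_of_cancel_zero _ (fun {Z} g hg => ?_)
      have h1 : g = biprod.lift (g ≫ biprod.fst) (g ≫ biprod.snd) := by
        apply biprod.hom_ext <;> simp
      rw [h1, biprod.lift_desc] at hg
      have hfac : (g ≫ biprod.fst) ≫ κ = (-(g ≫ biprod.snd)) ≫ j := by
        rw [Preadditive.neg_comp]
        exact eq_neg_of_add_eq_zero_left hg
      have hl0 : pullback.lift _ _ hfac = 0 := hR.eq_zero_of_tgt _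
      have hg1 : g ≫ biprod.fst = 0 := by
        rw [← pullback.lift_fst _ _ hfac, hl0, zero_comp]
      have hg2 : g ≫ biprod.snd = 0 := by
        have h2 := pullback.lift_snd _ _ hfac
        rw [hl0, zero_comp] at h2
        exact neg_eq_zero.mp h2.symm
      apply biprod.hom_ext <;> simp [hg1, hg2]
    -- the sum map is epi
    have hκπ : κ ≫ cokernel.π (biprod.desc κ j) = 0 := by
      have h' : κ ≫ cokernel.π (biprod.desc κ j)
          = biprod.inl ≫ biprod.desc κ j ≫ cokernel.π (biprod.desc κ j) := by
        rw [← Category.assoc, biprod.inl_desc]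
      rw [h', cokernel.condition, comp_zero]
    have hjπ : j ≫ cokernel.π (biprod.desc κ j) = 0 := by
      have h' : j ≫ cokernel.π (biprod.desc κ j)
          = biprod.inr ≫ biprod.desc κ j ≫ cokernel.π (biprod.desc κ j) := by
        rw [← Category.assoc, biprod.inr_desc]
      rw [h', cokernel.condition, comp_zero]
    have hT : IsZero (cokernel (biprod.desc κ j)) := by
      have ha : cokernel.π κ ≫ cokernel.desc κ (cokernel.π (biprod.desc κ j)) hκπ
          = cokernel.π (biprod.desc κ j) := cokernel.π_desc _ _ _
      haveI : Epi (cokernel.desc κ (cokernel.π (biprod.desc κ j)) hκπ) :=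
        epi_of_epi_fac ha
      haveI : Mono ((cokernel.desc κ (cokernel.π (biprod.desc κ j)) hκπ)ᘁ) :=
        tl_mate_mono _
      have hQT : IsZero (((cokernel κ)ᘁ : C) ⊗ cokernel (biprod.desc κ j)) :=
        tl_zed j (cokernel.π (biprod.desc κ j)) hjπ
      haveI : Mono ((cokernel.desc κ (cokernel.π (biprod.desc κ j)) hκπ)ᘁ ▷
          cokernel (biprod.desc κ j)) := tl_mono_whiskerRight _ _
      have h0 : (cokernel.desc κ (cokernel.π (biprod.desc κ j)) hκπ)ᘁ ▷
          cokernel (biprod.desc κ j) = 0 := hQT.eq_zero_of_tgt _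
      have hTT : IsZero (((cokernel (biprod.desc κ j))ᘁ : C) ⊗ cokernel (biprod.desc κ j)) :=
        tl_isZero_of_mono_zero _ h0
      exact tl_isZero_of_dual_tensor hTT
    haveI : Epi (biprod.desc κ j) := Preadditive.epi_of_isZero_cokernel _ hT
    haveI : IsIso (biprod.desc κ j) := isIso_of_mono_of_epi _
    -- idempotents
    obtain ⟨a1, hp1⟩ := hEnd (inv (biprod.desc κ j) ≫ biprod.fst ≫ κ)
    obtain ⟨a2, hp2⟩ := hEnd (inv (biprod.desc κ j) ≫ biprod.snd ≫ j)
    have hκinv : κ ≫ inv (biprod.desc κ j) = biprod.inl := by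
      rw [IsIso.comp_inv_eq]
      exact (biprod.inl_desc κ j).symm
    have hjinv : j ≫ inv (biprod.desc κ j) = biprod.inr := by
      rw [IsIso.comp_inv_eq]
      exact (biprod.inr_desc κ j).symm
    have hκp : κ ≫ (inv (biprod.desc κ j) ≫ biprod.fst ≫ κ) = κ := by
      rw [← Category.assoc, hκinv, biprod.inl_fst_assoc]
    have hjp : j ≫ (inv (biprod.desc κ j) ≫ biprod.snd ≫ j) = j := by
      rw [← Category.assoc, hjinv, biprod.inr_snd_assoc]
    have hκ0 : κ ≠ 0 := fun h => hK (tl_isZero_of_mono_zero κ h)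
    have hj0 : j ≠ 0 := by
      intro h
      exact hQ (tl_isZero_of_isZero_dual (tl_isZero_of_mono_zero j h))
    have ha1 : a1 = 1 := by
      rw [hp1, Linear.comp_smul, Category.comp_id] at hκp
      by_contra hne
      apply hκ0
      have : (a1 - 1) • κ = 0 := by rw [sub_smul, one_smul, hκp, sub_self]
      have h2 := congrArg (fun y => (a1 - 1)⁻¹ • y) this
      simpa [smul_smul, inv_mul_cancel₀ (sub_ne_zero.mpr hne)] using h2
    have ha2 : a2 = 1 := by
      rw [hp2, Linear.comp_smul, Category.comp_id] at hjp
      by_contra hne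
      apply hj0
      have : (a2 - 1) • j = 0 := by rw [sub_smul, one_smul, hjp, sub_self]
      have h2 := congrArg (fun y => (a2 - 1)⁻¹ • y) this
      simpa [smul_smul, inv_mul_cancel₀ (sub_ne_zero.mpr hne)] using h2
    have hsum : (inv (biprod.desc κ j) ≫ biprod.fst ≫ κ)
        + (inv (biprod.desc κ j) ≫ biprod.snd ≫ j) = 𝟙 (𝟙_ C) := by
      have htot : biprod.fst ≫ κ + biprod.snd ≫ j = biprod.desc κ j := by
        apply biprod.hom_ext'
        · rw [Preadditive.comp_add, biprod.inl_desc, ← Category.assoc, ← Category.assoc,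
            biprod.inl_fst, biprod.inl_snd, Category.id_comp, zero_comp, add_zero]
        · rw [Preadditive.comp_add, biprod.inr_desc, ← Category.assoc, ← Category.assoc,
            biprod.inr_fst, biprod.inr_snd, Category.id_comp, zero_comp, zero_add]
      rw [← Preadditive.comp_add, htot, IsIso.inv_hom_id]
    rw [hp1, hp2, ha1, ha2, one_smul] at hsum
    have hid : 𝟙 (𝟙_ C) = 0 := by
      have := congrArg (fun y => y - 𝟙 (𝟙_ C)) hsum
      simpa using this
    exact hU ((IsZero.iff_id_eq_zero _).mpr hid)

end Aux

/-- Let `X` be a nonzero symmetric Temperley–Lieb object: `X` is self-dual via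
`α = η_ X X : 𝟙 ⟶ X ⊗ X` and `β = ε_ X X : X ⊗ X ⟶ 𝟙` (an exact pairing), with
`β ∘ α = -2` and `c_{X,X} = id + α ∘ β`. Then `α` is a monomorphism, `β` is an epimorphism,
the image of `α` equals the image of `c_{X,X} - id`, and in particular `α` induces an
isomorphism `𝟙 ≅ ∧²X`. -/
theorem symmetric_TL_object_exteriorSquare
    (hNoeth : ∀ X : C, IsNoetherianObject X) (hArt : ∀ X : C, IsArtinianObject X)
    (hEnd : ∀ f : 𝟙_ C ⟶ 𝟙_ C, ∃ a : k, f = a • 𝟙 (𝟙_ C))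
    (X : C) [ExactPairing X X] (hX : ¬ IsZero X)
    (hβα : η_ X X ≫ ε_ X X = (-2 : k) • 𝟙 (𝟙_ C))
    (hc : (β_ X X).hom = 𝟙 (X ⊗ X) + ε_ X X ≫ η_ X X) :
    Mono (η_ X X) ∧ Epi (ε_ X X) ∧
      imageSubobject (η_ X X) = imageSubobject ((β_ X X).hom - 𝟙 (X ⊗ X)) ∧
      Nonempty ((𝟙_ C) ≅ image ((β_ X X).hom - 𝟙 (X ⊗ X))) := by
  have hd : (β_ X X).hom - 𝟙 (X ⊗ X) = ε_ X X ≫ η_ X X := by rw [hc]; abel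
  have hU : ¬ IsZero (𝟙_ C) := fun h =>
    hX (IsZero.of_iso (tl_isZero_tensorL h X) (λ_ X).symm)
  have hmono : Mono (η_ X X) := by
    by_cases hK : IsZero (kernel (η_ X X))
    · exact Preadditive.mono_of_isZero_kernel _ hK
    · exfalso
      haveI := tl_unit_sub_isIso hEnd hU (kernel.ι (η_ X X)) hK
      have h0 : η_ X X = 0 := by
        rw [← cancel_epi (kernel.ι (η_ X X)), kernel.condition, comp_zero]
      apply hX
      rw [IsZero.iff_id_eq_zero]
      have z := ExactPairing.evaluation_coevaluation (X := X) (Y := X)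
      calc 𝟙 X = (λ_ X).inv ≫ (η_ X X ▷ X ≫ (α_ _ _ _).hom ≫ X ◁ ε_ X X) ≫ (ρ_ X).hom := by
            rw [z]; simp
        _ = 0 := by rw [h0, MonoidalPreadditive.zero_whiskerRight]; simp
  have hepi : Epi (ε_ X X) := by
    by_cases hB : IsZero (cokernel (ε_ X X))
    · exact Preadditive.epi_of_isZero_cokernel _ hB
    · exfalso
      by_cases hK' : IsZero (kernel (cokernel.π (ε_ X X)))
      · haveI : Mono (cokernel.π (ε_ X X)) := Preadditive.mono_of_isZero_kernel _ hK'
        haveI : IsIso (cokernel.π (ε_ X X)) := isIso_of_mono_of_epi _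
        have h0 : ε_ X X = 0 := by
          rw [← cancel_mono (cokernel.π (ε_ X X)), cokernel.condition, zero_comp]
        apply hX
        rw [IsZero.iff_id_eq_zero]
        have z := ExactPairing.coevaluation_evaluation (X := X) (Y := X)
        calc 𝟙 X = (ρ_ X).inv ≫ (X ◁ η_ X X ≫ (α_ _ _ _).inv ≫ ε_ X X ▷ X) ≫ (λ_ X).hom := by
              rw [z]; simp
          _ = 0 := by rw [h0, MonoidalPreadditive.zero_whiskerRight]; simp
      · haveI := tl_unit_sub_isIso hEnd hU (kernel.ι (cokernel.π (ε_ X X))) hK'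
        have h0 : cokernel.π (ε_ X X) = 0 := by
          rw [← cancel_epi (kernel.ι (cokernel.π (ε_ X X))), kernel.condition, comp_zero]
        exact hB (tl_isZero_of_epi_zero _ h0)
  haveI := hmono
  haveI := hepi
  have hle := imageSubobject_comp_le (ε_ X X) (η_ X X)
  haveI : IsIso (Subobject.ofLE _ _ hle) := isIso_of_mono_of_epi _
  have heq : imageSubobject (η_ X X) = imageSubobject (ε_ X X ≫ η_ X X) := by
    refine le_antisymm ?_ hle
    refine Subobject.le_of_comm (inv (Subobject.ofLE _ _ hle)) ?_
    rw [IsIso.inv_comp_eq, Subobject.ofLE_arrow]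
  refine ⟨hmono, hepi, ?_, ?_⟩
  · rw [hd]; exact heq
  · rw [hd]
    exact ⟨(imageMonoIsoSource (η_ X X)).symm ≪≫ (imageSubobjectIso (η_ X X)).symm
      ≪≫ Subobject.isoOfEq _ _ heq ≪≫ imageSubobjectIso _⟩

end
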